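/- Let N ≥ 3, θ ∈ (0, π/4], μ = arctan(sin 2θ), and α = 2cos(2θ)/√(1+sin²(2θ)). Let |ψ⟩ = cosθ|0⟩^{⊗N} + sinθ|1⟩^{⊗N} ∈ (ℂ²)^{⊗N}. Put A_{0,i} = σ_Z and A_{1,i} = σ_X on sites i = 1,…,N−1, and A_{0,N} = cos(μ)σ_Z + sin(μ)σ_X, A_{1,N} = cos(μ)σ_Z − sin(μ)σ_X on site N. Then for every (a_1,…,a_{N−2}) ∈ {0,1}^{N−2}, ⟨ψ| (∏_{i=1}^{N−2} P^{a_i}_{A_{1,i}}) · (α A_{0,N−1} + A_{0,N−1}A_{0,N} + A_{0,N−1}A_{1,N} + (−1)^{a_1+⋯+a_{N−2}}(A_{1,N−1}A_{0,N} − A_{1,N−1}A_{1,N})) |ψ⟩ = √(8+2α²)·2^{−(N−2)}. -/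
import Mathlib


open scoped BigOperators
open Matrix

noncomputable section

/-- Pauli `σ_Z`. -/
def sZ : Matrix (Fin 2) (Fin 2) ℂ := !![1, 0; 0, -1]

/-- Pauli `σ_X`. -/
def sX : Matrix (Fin 2) (Fin 2) ℂ := !![0, 1; 1, 0]

/-- The projector `P^a_D = (I + (-1)^a D)/2`. -/
def projP {n : Type*} [Fintype n] [DecidableEq n] (a : Fin 2) (D : Matrix n n ℂ) :
    Matrix n n ℂ :=
  (2 : ℂ)⁻¹ • (1 + ((-1 : ℂ) ^ a.val) • D)

/-- The operator on `(ℂ²)^{⊗N}` acting as `M` on the `i`-th tensor factor and as the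
identity elsewhere. -/
def siteOpQ {N : ℕ} (i : Fin N) (M : Matrix (Fin 2) (Fin 2) ℂ) :
    Matrix (Fin N → Fin 2) (Fin N → Fin 2) ℂ :=
  fun x y => M (x i) (y i) * ∏ j ∈ Finset.univ.erase i, (if x j = y j then (1 : ℂ) else 0)

/-- The operator on `(ℂ²)^{⊗N}` acting as `F i` on the tensor factors `i ∈ S` and as the
identity elsewhere. -/
def multiOpQ {N : ℕ} (S : Finset (Fin N)) (F : Fin N → Matrix (Fin 2) (Fin 2) ℂ) :
    Matrix (Fin N → Fin 2) (Fin N → Fin 2) ℂ :=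
  fun x y => (∏ i ∈ S, F i (x i) (y i)) * ∏ j ∈ Sᶜ, (if x j = y j then (1 : ℂ) else 0)

/-- The tilted GHZ state with digit string `k`. -/
def ghzVec (N : ℕ) (θ : ℝ) (k : Fin N → Fin 2) : (Fin N → Fin 2) → ℂ :=
  fun x =>
    (if x = k then ((-1 : ℂ) ^ (∑ i, (k i).val)) * (Real.cos θ : ℂ) else 0) +
    (if x = (fun i => 1 - k i) then (Real.sin θ : ℂ) else 0)

/-- The ideal observables: `A_{0,i} = σ_Z`, `A_{1,i} = σ_X` for sites `i ≤ N-1`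
(0-indexed `i < N-1`), and `A_{0,N} = cos μ σ_Z + sin μ σ_X`,
`A_{1,N} = cos μ σ_Z - sin μ σ_X` on the last site. -/
def idealObs (N : ℕ) (μ : ℝ) (a : Fin 2) (i : Fin N) : Matrix (Fin 2) (Fin 2) ℂ :=
  if (i : ℕ) < N - 1 then (if a = 0 then sZ else sX)
  else
    (if a = 0 then (Real.cos μ : ℂ) • sZ + (Real.sin μ : ℂ) • sX
     else (Real.cos μ : ℂ) • sZ - (Real.sin μ : ℂ) • sX)

lemma multiOpQ_mul {N : ℕ} (S T : Finset (Fin N)) (h : Disjoint S T)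
    (F G : Fin N → Matrix (Fin 2) (Fin 2) ℂ) :
    multiOpQ S F * multiOpQ T G
      = multiOpQ (S ∪ T) (fun i => if i ∈ S then F i else G i) := by
  ext x y
  simp only [Matrix.mul_apply, multiOpQ]
  rw [Finset.sum_eq_single (fun i => if i ∈ S then y i else x i)]
  · have h1 : ∏ j ∈ Sᶜ, (if x j = (if j ∈ S then y j else x j) then (1:ℂ) else 0) = 1 := by
      apply Finset.prod_eq_one
      intro j hj
      rw [if_neg (Finset.mem_compl.mp hj), if_pos rfl]
    have hF : ∏ i ∈ S, F i (x i) (if i ∈ S then y i else x i) = ∏ i ∈ S, F i (x i) (y i) := by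
      refine Finset.prod_congr rfl fun i hi => by rw [if_pos hi]
    have hG : ∏ i ∈ T, G i (if i ∈ S then y i else x i) (y i) = ∏ i ∈ T, G i (x i) (y i) := by
      refine Finset.prod_congr rfl fun i hi => by
        rw [if_neg (Finset.disjoint_right.mp h hi)]
    have hTc : Tᶜ = S ∪ (S ∪ T)ᶜ := by
      ext j
      simp only [Finset.mem_compl, Finset.mem_union, not_or]
      constructor
      · intro hj
        by_cases hS : j ∈ S
        · exact Or.inl hS
        · exact Or.inr ⟨hS, hj⟩
      · rintro (hS | ⟨-, hT⟩)
        · exact Finset.disjoint_left.mp h hS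
        · exact hT
    have hdisj : Disjoint S ((S ∪ T)ᶜ) := by
      exact disjoint_compl_right_iff.mpr (Finset.subset_union_left)
    have h2 : ∏ j ∈ Tᶜ, (if (if j ∈ S then y j else x j) = y j then (1:ℂ) else 0)
        = ∏ j ∈ (S ∪ T)ᶜ, (if x j = y j then (1:ℂ) else 0) := by
      rw [hTc, Finset.prod_union hdisj]
      have e1 : ∏ j ∈ S, (if (if j ∈ S then y j else x j) = y j then (1:ℂ) else 0) = 1 :=
        Finset.prod_eq_one fun j hj => by rw [if_pos hj, if_pos rfl]
      have e2 : ∏ j ∈ (S ∪ T)ᶜ, (if (if j ∈ S then y j else x j) = y j then (1:ℂ) else 0)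
          = ∏ j ∈ (S ∪ T)ᶜ, (if x j = y j then (1:ℂ) else 0) := by
        refine Finset.prod_congr rfl fun j hj => by
          rw [if_neg (fun hS => (Finset.mem_compl.mp hj) (Finset.mem_union_left _ hS))]
      rw [e1, e2, one_mul]
    rw [h1, hF, hG, h2, Finset.prod_union h]
    have e3 : ∏ i ∈ S, (if i ∈ S then F i else G i) (x i) (y i) = ∏ i ∈ S, F i (x i) (y i) :=
      Finset.prod_congr rfl fun i hi => by rw [if_pos hi]
    have e4 : ∏ i ∈ T, (if i ∈ S then F i else G i) (x i) (y i) = ∏ i ∈ T, G i (x i) (y i) :=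
      Finset.prod_congr rfl fun i hi => by rw [if_neg (Finset.disjoint_right.mp h hi)]
    rw [e3, e4]; ring
  · intro z _ hz
    have : ∃ i, z i ≠ (if i ∈ S then y i else x i) := Function.ne_iff.mp hz
    obtain ⟨i, hi⟩ := this
    by_cases hS : i ∈ S
    · rw [if_pos hS] at hi
      have hTc : i ∈ Tᶜ := Finset.mem_compl.mpr (Finset.disjoint_left.mp h hS)
      have : ∏ j ∈ Tᶜ, (if z j = y j then (1:ℂ) else 0) = 0 :=
        Finset.prod_eq_zero hTc (if_neg hi)
      rw [this]; ring
    · rw [if_neg hS] at hi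
      have hSc : i ∈ Sᶜ := Finset.mem_compl.mpr hS
      have : ∏ j ∈ Sᶜ, (if x j = z j then (1:ℂ) else 0) = 0 :=
        Finset.prod_eq_zero hSc (if_neg fun hh => hi hh.symm)
      rw [this]; ring
  · intro hnm; exact absurd (Finset.mem_univ _) hnm

lemma siteOpQ_eq {N : ℕ} (i : Fin N) (M : Matrix (Fin 2) (Fin 2) ℂ) :
    siteOpQ i M = multiOpQ {i} (fun _ => M) := by
  ext x y
  simp [siteOpQ, multiOpQ, Finset.compl_singleton]

lemma multiOpQ_const {N : ℕ} (S : Finset (Fin N)) (F : Fin N → Matrix (Fin 2) (Fin 2) ℂ)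
    (a b : Fin 2) :
    multiOpQ S F (fun _ => a) (fun _ => b)
      = (∏ i ∈ S, F i a b) * (if a = b then 1 else 0) ^ Sᶜ.card := by
  simp [multiOpQ, Finset.prod_const]

lemma card_filter_lt (N c : ℕ) (h : c ≤ N) :
    (Finset.univ.filter fun i : Fin N => (i : ℕ) < c).card = c := by
  rw [show (Finset.univ.filter fun i : Fin N => (i : ℕ) < c)
      = Finset.univ.map (Fin.castLEEmb h) from ?_]
  · simp
  · ext i
    simp only [Finset.mem_filter, Finset.mem_univ, true_and, Finset.mem_map]
    constructor
    · intro hi; exact ⟨⟨i, hi⟩, by ext; simp⟩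
    · rintro ⟨j, rfl⟩; exact j.isLt

lemma projP_sX_apply (c : Fin 2) (b d : Fin 2) :
    projP c sX b d = 2⁻¹ * (if b = d then 1 else (-1 : ℂ) ^ c.val) := by
  fin_cases b <;> fin_cases d <;>
    simp [projP, sX, Matrix.one_apply]

lemma prod_proj_diag {N : ℕ} (S : Finset (Fin N)) (a : Fin N → Fin 2) (b : Fin 2) :
    ∏ i ∈ S, projP (a i) sX b b = (2⁻¹ : ℂ) ^ S.card := by
  rw [Finset.prod_congr rfl fun i _ => projP_sX_apply (a i) b b]
  simp

lemma prod_proj_off {N : ℕ} (S : Finset (Fin N)) (a : Fin N → Fin 2) (b d : Fin 2)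
    (hbd : b ≠ d) :
    ∏ i ∈ S, projP (a i) sX b d
      = (-1 : ℂ) ^ (∑ i ∈ S, (a i).val) * (2⁻¹ : ℂ) ^ S.card := by
  rw [Finset.prod_congr rfl fun i _ => projP_sX_apply (a i) b d]
  simp only [if_neg hbd]
  rw [Finset.prod_mul_distrib, Finset.prod_const, Finset.prod_pow_eq_pow_sum]
  ring

lemma quad {N : ℕ} (θ : ℝ) (M : Matrix (Fin N → Fin 2) (Fin N → Fin 2) ℂ) :
    star (ghzVec N θ fun _ => 0) ⬝ᵥ M.mulVec (ghzVec N θ fun _ => 0)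
      = (Real.cos θ : ℂ) ^ 2 * M (fun _ => 0) (fun _ => 0)
        + (Real.cos θ : ℂ) * (Real.sin θ : ℂ) * M (fun _ => 0) (fun _ => 1)
        + (Real.sin θ : ℂ) * (Real.cos θ : ℂ) * M (fun _ => 1) (fun _ => 0)
        + (Real.sin θ : ℂ) ^ 2 * M (fun _ => 1) (fun _ => 1) := by
  have hgh : ghzVec N θ (fun _ => 0)
      = fun x => (if x = (fun _ => 0) then (Real.cos θ : ℂ) else 0)
        + (if x = (fun _ => 1) then (Real.sin θ : ℂ) else 0) := by
    funext x
    simp [ghzVec]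
  have hs : star (ghzVec N θ fun _ => 0) = ghzVec N θ (fun _ => 0) := by
    funext x
    simp only [hgh, Pi.star_apply, star_add, apply_ite (starRingEnd ℂ), Complex.star_def, map_zero, Complex.conj_ofReal]
  rw [hs]
  simp only [dotProduct, Matrix.mulVec, hgh]
  simp [Finset.mul_sum, Finset.sum_add_distrib, add_mul, mul_add, ite_mul, mul_ite,
    zero_mul, mul_zero, Finset.sum_ite_eq', Finset.sum_ite_eq]
  ring

set_option maxHeartbeats 2000000 in
lemma stmt9_aux (N : ℕ) (hN : 3 ≤ N) (θ μ α : ℝ)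
    (hμ : μ = Real.arctan (Real.sin (2 * θ)))
    (hα : α = 2 * Real.cos (2 * θ) / Real.sqrt (1 + Real.sin (2 * θ) ^ 2))
    (a : Fin N → Fin 2) (i2 i1 : Fin N) (h2 : (i2 : ℕ) = N - 2) (h1 : (i1 : ℕ) = N - 1) :
      star (ghzVec N θ fun _ => 0) ⬝ᵥ
          ((multiOpQ (Finset.univ.filter fun i : Fin N => (i : ℕ) < N - 2)
              (fun i => projP (a i) (idealObs N μ 1 i)) *
            ((α : ℂ) • siteOpQ i2 (idealObs N μ 0 i2) +
              siteOpQ i2 (idealObs N μ 0 i2) *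
                siteOpQ i1 (idealObs N μ 0 i1) +
              siteOpQ i2 (idealObs N μ 0 i2) *
                siteOpQ i1 (idealObs N μ 1 i1) +
              ((-1 : ℂ) ^
                  (∑ i ∈ Finset.univ.filter (fun i : Fin N => (i : ℕ) < N - 2), (a i).val)) •
                (siteOpQ i2 (idealObs N μ 1 i2) *
                    siteOpQ i1 (idealObs N μ 0 i1) -
                  siteOpQ i2 (idealObs N μ 1 i2) *
                    siteOpQ i1
                      (idealObs N μ 1 i1))))).mulVec
            (ghzVec N θ fun _ => 0) =
        (Real.sqrt (8 + 2 * α ^ 2) : ℂ) * ((2 : ℂ) ^ (N - 2))⁻¹ := by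
  classical
  set S : Finset (Fin N) := Finset.univ.filter fun i : Fin N => (i : ℕ) < N - 2 with hS
  have h2S : i2 ∉ S := by simp only [hS, Finset.mem_filter, Finset.mem_univ, true_and, h2]; omega
  have h1S : i1 ∉ S := by simp only [hS, Finset.mem_filter, Finset.mem_univ, true_and, h1]; omega
  have hii : i2 ≠ i1 := by intro h; rw [h, h1] at h2; omega
  have hd1 : Disjoint S ({i2} : Finset (Fin N)) := Finset.disjoint_singleton_right.mpr h2S
  have h1S2 : i1 ∉ S ∪ ({i2} : Finset (Fin N)) := by
    simp only [Finset.mem_union, Finset.mem_singleton, not_or]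
    exact ⟨h1S, fun h => hii h.symm⟩
  have hd2 : Disjoint (S ∪ ({i2} : Finset (Fin N))) ({i1} : Finset (Fin N)) :=
    Finset.disjoint_singleton_right.mpr h1S2
  have hc1 : (S ∪ ({i2} : Finset (Fin N)))ᶜ = {i1} := by
    ext j
    have hj := j.isLt
    simp only [Finset.mem_compl, Finset.mem_union, Finset.mem_singleton, hS,
      Finset.mem_filter, Finset.mem_univ, true_and, not_or, Fin.ext_iff, h2, h1]
    omega
  have hu : S ∪ ({i2} : Finset (Fin N)) ∪ ({i1} : Finset (Fin N)) = Finset.univ := by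
    ext j
    have hj := j.isLt
    simp only [Finset.mem_union, Finset.mem_singleton, hS, Finset.mem_filter,
      Finset.mem_univ, true_and, Fin.ext_iff, h2, h1, iff_true]
    omega
  have hcard : S.card = N - 2 := by rw [hS]; exact card_filter_lt N (N - 2) (by omega)
  have hlt : N - 2 < N - 1 := by omega
  have hone : (1 : Fin 2) ≠ 0 := by decide
  have hZ : idealObs N μ 0 i2 = sZ := by simp [idealObs, h2, hlt]
  have hX2 : idealObs N μ 1 i2 = sX := by simp [idealObs, h2, hlt, hone]
  have hW0 : idealObs N μ 0 i1 = (Real.cos μ : ℂ) • sZ + (Real.sin μ : ℂ) • sX := by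
    simp [idealObs, h1]
  have hW1 : idealObs N μ 1 i1 = (Real.cos μ : ℂ) • sZ - (Real.sin μ : ℂ) • sX := by
    simp [idealObs, h1, hone]
  have hFS : ∀ i ∈ S, idealObs N μ 1 i = sX := by
    intro i hi
    rw [hS] at hi
    have : (i : ℕ) < N - 2 := (Finset.mem_filter.mp hi).2
    simp [idealObs, (by omega : (i : ℕ) < N - 1), hone]
  set W0 : Matrix (Fin 2) (Fin 2) ℂ := (Real.cos μ : ℂ) • sZ + (Real.sin μ : ℂ) • sX with hW0d
  set W1 : Matrix (Fin 2) (Fin 2) ℂ := (Real.cos μ : ℂ) • sZ - (Real.sin μ : ℂ) • sX with hW1d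
  set ε : ℂ := (-1 : ℂ) ^ (∑ i ∈ S, (a i).val) with hε
  have hε2 : ε * ε = 1 := by rw [hε, ← mul_pow]; norm_num
  set P : Matrix (Fin N → Fin 2) (Fin N → Fin 2) ℂ :=
    multiOpQ S (fun i => projP (a i) (idealObs N μ 1 i)) with hP
  rw [hZ, hX2, hW0, hW1]
  -- distribute
  have hdist : P * ((α : ℂ) • siteOpQ i2 sZ + siteOpQ i2 sZ * siteOpQ i1 W0 +
        siteOpQ i2 sZ * siteOpQ i1 W1 +
        ε • (siteOpQ i2 sX * siteOpQ i1 W0 - siteOpQ i2 sX * siteOpQ i1 W1))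
      = (α : ℂ) • (P * siteOpQ i2 sZ) + (P * siteOpQ i2 sZ) * siteOpQ i1 W0 +
        (P * siteOpQ i2 sZ) * siteOpQ i1 W1 +
        ε • ((P * siteOpQ i2 sX) * siteOpQ i1 W0 - (P * siteOpQ i2 sX) * siteOpQ i1 W1) := by
    simp only [Matrix.mul_add, Matrix.mul_smul, Matrix.mul_sub, ← Matrix.mul_assoc]
  rw [hdist]
  -- multiOpQ forms
  have pz : P * siteOpQ i2 sZ
      = multiOpQ (S ∪ {i2})
          (fun i => if i ∈ S then projP (a i) (idealObs N μ 1 i) else sZ) := by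
    rw [hP, siteOpQ_eq, multiOpQ_mul S {i2} hd1]
  have px : P * siteOpQ i2 sX
      = multiOpQ (S ∪ {i2})
          (fun i => if i ∈ S then projP (a i) (idealObs N μ 1 i) else sX) := by
    rw [hP, siteOpQ_eq, multiOpQ_mul S {i2} hd1]
  have pzw : ∀ A B : Matrix (Fin 2) (Fin 2) ℂ,
      multiOpQ (S ∪ {i2}) (fun i => if i ∈ S then projP (a i) (idealObs N μ 1 i) else A) *
        siteOpQ i1 B
      = multiOpQ (S ∪ {i2} ∪ {i1})
          (fun i => if i ∈ S ∪ {i2}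
            then (if i ∈ S then projP (a i) (idealObs N μ 1 i) else A) else B) := by
    intro A B
    rw [siteOpQ_eq, multiOpQ_mul _ {i1} hd2]
  rw [pz, px, pzw, pzw, pzw, pzw]
  -- entries of the full-union multiOpQ
  have entry : ∀ (A B : Matrix (Fin 2) (Fin 2) ℂ) (b d : Fin 2),
      multiOpQ (S ∪ {i2} ∪ {i1})
          (fun i => if i ∈ S ∪ {i2}
            then (if i ∈ S then projP (a i) (idealObs N μ 1 i) else A) else B)
          (fun _ => b) (fun _ => d)
        = (∏ i ∈ S, projP (a i) sX b d) * A b d * B b d := by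
    intro A B b d
    rw [multiOpQ_const, show (S ∪ {i2} ∪ ({i1} : Finset (Fin N)))ᶜ = ∅ by
        rw [hu, Finset.compl_univ],
      Finset.card_empty, pow_zero, mul_one,
      Finset.prod_union hd2, Finset.prod_union hd1, Finset.prod_singleton,
      Finset.prod_singleton]
    rw [if_pos (Finset.mem_union_right S (Finset.mem_singleton_self i2)), if_neg h2S,
      if_neg h1S2]
    have hprod : ∏ i ∈ S, (if i ∈ S ∪ {i2}
          then (if i ∈ S then projP (a i) (idealObs N μ 1 i) else A) else B) b d
        = ∏ i ∈ S, projP (a i) sX b d :=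
      Finset.prod_congr rfl fun i hi => by
        rw [if_pos (Finset.mem_union_left _ hi), if_pos hi, hFS i hi]
    rw [hprod]
  have entry2 : ∀ (A : Matrix (Fin 2) (Fin 2) ℂ) (b d : Fin 2),
      multiOpQ (S ∪ {i2})
          (fun i => if i ∈ S then projP (a i) (idealObs N μ 1 i) else A)
          (fun _ => b) (fun _ => d)
        = (∏ i ∈ S, projP (a i) sX b d) * A b d * (if b = d then 1 else 0) := by
    intro A b d
    rw [multiOpQ_const, hc1, Finset.card_singleton, pow_one,
      Finset.prod_union hd1, Finset.prod_singleton, if_neg h2S]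
    have hprod : ∏ i ∈ S, (if i ∈ S then projP (a i) (idealObs N μ 1 i) else A) b d
        = ∏ i ∈ S, projP (a i) sX b d :=
      Finset.prod_congr rfl fun i hi => by rw [if_pos hi, hFS i hi]
    rw [hprod]
  rw [quad]
  simp only [Matrix.add_apply, Matrix.smul_apply, Matrix.sub_apply, entry, entry2]
  rw [prod_proj_diag, prod_proj_diag, prod_proj_off S a 0 1 (by decide),
    prod_proj_off S a 1 0 (by decide), hcard]
  have hsZ00 : sZ 0 0 = 1 := rfl
  have hsZ01 : sZ 0 1 = 0 := rfl
  have hsZ10 : sZ 1 0 = 0 := rfl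
  have hsZ11 : sZ 1 1 = -1 := rfl
  have hsX00 : sX 0 0 = 0 := rfl
  have hsX01 : sX 0 1 = 1 := rfl
  have hsX10 : sX 1 0 = 1 := rfl
  have hsX11 : sX 1 1 = 0 := rfl
  simp only [Matrix.add_apply, Matrix.sub_apply, Matrix.smul_apply, hsZ00, hsZ01, hsZ10,
    hsZ11, hsX00, hsX01, hsX10, hsX11, smul_eq_mul, mul_one, mul_zero, mul_neg, zero_add,
    add_zero, sub_zero, zero_sub, if_pos rfl]
  rw [if_neg (by decide : (0 : Fin 2) ≠ 1), if_neg (by decide : (1 : Fin 2) ≠ 0)]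
  -- now a scalar identity
  have keyR : Real.cos θ ^ 2 * (α + 2 * Real.cos μ)
      + Real.cos θ * Real.sin θ * (2 * Real.sin μ)
      + Real.sin θ * Real.cos θ * (2 * Real.sin μ)
      + Real.sin θ ^ 2 * (2 * Real.cos μ - α)
      = Real.sqrt (8 + 2 * α ^ 2) := by
    subst hμ hα
    set s := Real.sin (2 * θ) with hs
    set c := Real.cos (2 * θ) with hc
    rw [Real.cos_arctan, Real.sin_arctan]
    set r := Real.sqrt (1 + s ^ 2) with hr
    have hr2 : r ^ 2 = 1 + s ^ 2 := Real.sq_sqrt (by positivity)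
    have hr0 : 0 < r := Real.sqrt_pos.mpr (by positivity)
    have hsc : s ^ 2 + c ^ 2 = 1 := Real.sin_sq_add_cos_sq _
    have hsqrt : Real.sqrt (8 + 2 * (2 * c / r) ^ 2) = 4 / r := by
      rw [show 8 + 2 * (2 * c / r) ^ 2 = (4 / r) ^ 2 by
        field_simp; nlinarith [hr2, hsc]]
      exact Real.sqrt_sq (by positivity)
    rw [hsqrt]
    have hs2 : s = 2 * Real.sin θ * Real.cos θ := by rw [hs, Real.sin_two_mul]
    have hc2 : c = 2 * Real.cos θ ^ 2 - 1 := by rw [hc, Real.cos_two_mul]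
    have hpy : Real.sin θ ^ 2 + Real.cos θ ^ 2 = 1 := Real.sin_sq_add_cos_sq θ
    rw [hs2, hc2]
    have hr0' : r ≠ 0 := ne_of_gt hr0
    field_simp
    linear_combination (4 * Real.cos θ ^ 2 + 4) * hpy
  have w000 : W0 0 0 = (Real.cos μ : ℂ) := by
    rw [hW0d]; simp [sZ, sX, Matrix.add_apply, Matrix.smul_apply]
  have w011 : W0 1 1 = -(Real.cos μ : ℂ) := by
    rw [hW0d]; simp [sZ, sX, Matrix.add_apply, Matrix.smul_apply]
  have w001 : W0 0 1 = (Real.sin μ : ℂ) := by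
    rw [hW0d]; simp [sZ, sX, Matrix.add_apply, Matrix.smul_apply]
  have w010 : W0 1 0 = (Real.sin μ : ℂ) := by
    rw [hW0d]; simp [sZ, sX, Matrix.add_apply, Matrix.smul_apply]
  have w100 : W1 0 0 = (Real.cos μ : ℂ) := by
    rw [hW1d]; simp [sZ, sX, Matrix.sub_apply, Matrix.smul_apply]
  have w111 : W1 1 1 = -(Real.cos μ : ℂ) := by
    rw [hW1d]; simp [sZ, sX, Matrix.sub_apply, Matrix.smul_apply]
  have w101 : W1 0 1 = -(Real.sin μ : ℂ) := by
    rw [hW1d]; simp [sZ, sX, Matrix.sub_apply, Matrix.smul_apply]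
  have w110 : W1 1 0 = -(Real.sin μ : ℂ) := by
    rw [hW1d]; simp [sZ, sX, Matrix.sub_apply, Matrix.smul_apply]
  have hs2' : ((-1 : ℂ) ^ (∑ i ∈ S, (a i).val)) * ((-1 : ℂ) ^ (∑ i ∈ S, (a i).val)) = 1 := by
    rw [← mul_pow]; norm_num
  have keyC : (Real.cos θ : ℂ) ^ 2 * ((α : ℂ) + 2 * (Real.cos μ : ℂ))
      + (Real.cos θ : ℂ) * (Real.sin θ : ℂ) * (2 * (Real.sin μ : ℂ))
      + (Real.sin θ : ℂ) * (Real.cos θ : ℂ) * (2 * (Real.sin μ : ℂ))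
      + (Real.sin θ : ℂ) ^ 2 * (2 * (Real.cos μ : ℂ) - (α : ℂ))
      = ((Real.sqrt (8 + 2 * α ^ 2) : ℝ) : ℂ) := by exact_mod_cast keyR
  simp only [hε]
  rw [w000, w011, w001, w010, w100, w111, w101, w110]
  rw [show ((2 : ℂ) ^ (N - 2))⁻¹ = ((2 : ℂ)⁻¹) ^ (N - 2) from (inv_pow 2 (N - 2)).symm]
  simp only [if_true]
  linear_combination ((2 : ℂ)⁻¹) ^ (N - 2) * keyC
    + ((Real.cos θ : ℂ) * (Real.sin θ : ℂ) * 2 * (Real.sin μ : ℂ) * ((2 : ℂ)⁻¹) ^ (N - 2)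
       + (Real.sin θ : ℂ) * (Real.cos θ : ℂ) * 2 * (Real.sin μ : ℂ) * ((2 : ℂ)⁻¹) ^ (N - 2)) * hs2'

/-- the ideal tilted-CHSH correlation of Lemma 1, condition (iii), holds
exactly on the tilted GHZ state with the ideal observables. -/
theorem stmt_9 (N : ℕ) (hN : 3 ≤ N) (θ μ α : ℝ) (hθ : θ ∈ Set.Ioc 0 (Real.pi / 4))
    (hμ : μ = Real.arctan (Real.sin (2 * θ)))
    (hα : α = 2 * Real.cos (2 * θ) / Real.sqrt (1 + Real.sin (2 * θ) ^ 2)) :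
    ∀ a : Fin N → Fin 2,
      star (ghzVec N θ fun _ => 0) ⬝ᵥ
          ((multiOpQ (Finset.univ.filter fun i : Fin N => (i : ℕ) < N - 2)
              (fun i => projP (a i) (idealObs N μ 1 i)) *
            ((α : ℂ) • siteOpQ (⟨N - 2, by omega⟩ : Fin N) (idealObs N μ 0 ⟨N - 2, by omega⟩) +
              siteOpQ (⟨N - 2, by omega⟩ : Fin N) (idealObs N μ 0 ⟨N - 2, by omega⟩) *
                siteOpQ (⟨N - 1, by omega⟩ : Fin N) (idealObs N μ 0 ⟨N - 1, by omega⟩) +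
              siteOpQ (⟨N - 2, by omega⟩ : Fin N) (idealObs N μ 0 ⟨N - 2, by omega⟩) *
                siteOpQ (⟨N - 1, by omega⟩ : Fin N) (idealObs N μ 1 ⟨N - 1, by omega⟩) +
              ((-1 : ℂ) ^
                  (∑ i ∈ Finset.univ.filter (fun i : Fin N => (i : ℕ) < N - 2), (a i).val)) •
                (siteOpQ (⟨N - 2, by omega⟩ : Fin N) (idealObs N μ 1 ⟨N - 2, by omega⟩) *
                    siteOpQ (⟨N - 1, by omega⟩ : Fin N) (idealObs N μ 0 ⟨N - 1, by omega⟩) -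
                  siteOpQ (⟨N - 2, by omega⟩ : Fin N) (idealObs N μ 1 ⟨N - 2, by omega⟩) *
                    siteOpQ (⟨N - 1, by omega⟩ : Fin N)
                      (idealObs N μ 1 ⟨N - 1, by omega⟩))))).mulVec
            (ghzVec N θ fun _ => 0) =
        (Real.sqrt (8 + 2 * α ^ 2) : ℂ) * ((2 : ℂ) ^ (N - 2))⁻¹ := by
  intro a
  exact stmt9_aux N hN θ μ α hμ hα a _ _ rfl rfl

end
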